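/- Suppose q is not proportional to q_κ*: for every real number A there exists u > 0 with q(u) ≠ A·q_κ*(u). Then q changes sign infinitely often: for every u > 0 there exist s ≥ u and t ≥ u with q(s) > 0 and q(t) < 0. -/

import Mathlib

open MeasureTheory Filter Set

/-- The solution `q_κ*(u) = ∫_0^∞ exp(−u x − κ ∫_0^x (1 − e^{−t})/t dt) dx`. -/
noncomputable def qkstar (κ : ℝ) (u : ℝ) : ℝ :=
  ∫ x in Set.Ioi (0 : ℝ),
    Real.exp (-(u * x) - κ * ∫ t in (0 : ℝ)..x, (1 - Real.exp (-t)) / t)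

noncomputable def hfun (t : ℝ) : ℝ := (1 - Real.exp (-t)) / t
noncomputable def Ifun (x : ℝ) : ℝ := ∫ t in (0:ℝ)..x, hfun t

lemma hfun_meas : Measurable hfun := by
  unfold hfun
  exact (measurable_const.sub (measurable_id.neg.exp)).div measurable_id

lemma hfun_nonneg {t : ℝ} (ht : 0 ≤ t) : 0 ≤ hfun t := by
  unfold hfun
  apply div_nonneg _ ht
  simp [Real.exp_le_one_iff.2 (by linarith : -t ≤ 0)]

lemma hfun_le_one {t : ℝ} (ht : 0 ≤ t) : hfun t ≤ 1 := by
  unfold hfun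
  rcases eq_or_lt_of_le ht with h | h
  · simp [← h]
  · rw [div_le_one h]
    have := Real.add_one_le_exp (-t)
    linarith

lemma hfun_abs_le (t : ℝ) : |hfun t| ≤ Real.exp |t| := by
  rcases lt_trichotomy t 0 with h | h | h
  · have h1 : hfun t = (Real.exp (-t) - 1) / (-t) := by
      unfold hfun; rw [div_neg, ← neg_div, neg_sub]
    have h2 : (0:ℝ) < -t := by linarith
    have hm := mul_le_mul_of_nonneg_right (Real.add_one_le_exp t) (Real.exp_pos (-t)).le
    rw [← Real.exp_add] at hm
    simp only [add_neg_cancel, Real.exp_zero] at hm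
    have h3 : Real.exp (-t) - 1 ≤ (-t) * Real.exp (-t) := by nlinarith
    have h4 : 0 ≤ hfun t := by
      rw [h1]; apply div_nonneg _ h2.le
      have := Real.add_one_le_exp (-t); linarith
    rw [abs_of_nonneg h4, h1, abs_of_neg h, div_le_iff₀ h2]
    nlinarith [Real.exp_pos (-t)]
  · simp [hfun, h]
  · rw [abs_of_nonneg (hfun_nonneg h.le)]
    calc hfun t ≤ 1 := hfun_le_one h.le
    _ ≤ Real.exp |t| := by simpa using Real.one_le_exp (abs_nonneg t)

lemma hfun_intInt (a b : ℝ) : IntervalIntegrable hfun volume a b := by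
  have hC : ∀ t ∈ uIoc a b, ‖hfun t‖ ≤ ‖Real.exp (max |a| |b|)‖ := by
    intro t ht
    rw [Real.norm_eq_abs, Real.norm_eq_abs, abs_of_pos (Real.exp_pos _)]
    refine le_trans (hfun_abs_le t) (Real.exp_le_exp.2 ?_)
    rcases le_total a b with hab | hab
    · rw [uIoc_of_le hab] at ht; exact abs_le_max_abs_abs ht.1.le ht.2
    · rw [uIoc_of_ge hab] at ht
      exact le_trans (abs_le_max_abs_abs ht.1.le ht.2) (by rw [max_comm])
  exact (intervalIntegrable_const (c := Real.exp (max |a| |b|))).mono_fun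
    hfun_meas.aestronglyMeasurable.restrict
    ((ae_restrict_mem measurableSet_uIoc).mono hC)

lemma Ifun_cont : Continuous Ifun :=
  intervalIntegral.continuous_primitive (fun a b => hfun_intInt a b) 0

lemma Ifun_nonneg {x : ℝ} (hx : 0 ≤ x) : 0 ≤ Ifun x := by
  apply intervalIntegral.integral_nonneg hx
  intro t ht; exact hfun_nonneg ht.1

lemma Ifun_le {x : ℝ} (hx : 0 ≤ x) : Ifun x ≤ x := by
  calc Ifun x ≤ ∫ t in (0:ℝ)..x, 1 := by
        apply intervalIntegral.integral_mono_on hx (hfun_intInt 0 x)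
          intervalIntegrable_const
        intro t ht; exact hfun_le_one ht.1
  _ = x := by simp

lemma hfun_contAt {x : ℝ} (hx : x ≠ 0) : ContinuousAt hfun x :=
  ContinuousAt.div (by fun_prop) (by fun_prop) hx

lemma Ifun_hasDeriv {x : ℝ} (hx : 0 < x) : HasDerivAt Ifun (hfun x) x :=
  intervalIntegral.integral_hasDerivAt_right (hfun_intInt 0 x)
    hfun_meas.stronglyMeasurable.stronglyMeasurableAtFilter (hfun_contAt hx.ne')

noncomputable def ffun (κ x : ℝ) : ℝ := Real.exp (-(κ * Ifun x))

lemma ffun_pos (κ x : ℝ) : 0 < ffun κ x := Real.exp_pos _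
lemma ffun_le_one {κ x : ℝ} (hκ : 0 ≤ κ) (hx : 0 ≤ x) : ffun κ x ≤ 1 := by
  unfold ffun
  rw [Real.exp_le_one_iff]
  simp [mul_nonneg hκ (Ifun_nonneg hx)]
lemma ffun_cont (κ : ℝ) : Continuous (ffun κ) :=
  ((continuous_const.mul Ifun_cont).neg).rexp

lemma ffun_hasDeriv (κ : ℝ) {x : ℝ} (hx : 0 < x) :
    HasDerivAt (ffun κ) (-(ffun κ x * (κ * hfun x))) x := by
  have h := (((Ifun_hasDeriv hx).const_mul κ).neg).exp
  rw [show ffun κ = fun x => Real.exp (-(κ * Ifun x)) from rfl]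
  refine h.congr_deriv ?_
  show Real.exp (-(κ * Ifun x)) * -(κ * hfun x) = -(Real.exp (-(κ * Ifun x)) * (κ * hfun x))
  ring

lemma qk_eq (κ u : ℝ) :
    qkstar κ u = ∫ x in Set.Ioi (0:ℝ), Real.exp (-(u * x)) * ffun κ x := by
  unfold qkstar ffun Ifun hfun
  congr 1; funext x
  rw [sub_eq_add_neg, Real.exp_add]

lemma intOn_aux {u C : ℝ} (hu : 0 < u) {g : ℝ → ℝ} (hg : Measurable g)
    (hC : ∀ x ∈ Ioi (0:ℝ), |g x| ≤ C) :
    IntegrableOn (fun x => Real.exp (-(u*x)) * g x) (Ioi (0:ℝ)) := by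
  apply Integrable.mono' (g := fun x => Real.exp (-u*x) * C)
    ((exp_neg_integrableOn_Ioi 0 hu).mul_const C)
    (((measurable_id.const_mul u).neg.exp.mul hg).aestronglyMeasurable.restrict)
  filter_upwards [ae_restrict_mem measurableSet_Ioi] with x hx
  simp only [Real.norm_eq_abs, Pi.mul_apply, Pi.neg_apply, id_eq]
  rw [abs_mul, abs_of_pos (Real.exp_pos _), neg_mul]
  exact mul_le_mul_of_nonneg_left (hC x hx) (Real.exp_pos _).le

lemma integral_exp_Ioi {u : ℝ} (hu : 0 < u) :
    ∫ x in Ioi (0:ℝ), Real.exp (-(u*x)) = 1/u := by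
  have h : ∀ x ∈ Ioi (0:ℝ), HasDerivAt (fun x => -Real.exp (-(u*x))/u) (Real.exp (-(u*x))) x := by
    intro x _
    have := (((hasDerivAt_id x).const_mul u).neg).exp
    refine (this.neg.div_const u).congr_deriv ?_
    simp [hu.ne']
  have hint : IntegrableOn (fun x => Real.exp (-(u*x))) (Ioi (0:ℝ)) := by
    simpa [neg_mul] using exp_neg_integrableOn_Ioi 0 hu
  have := MeasureTheory.integral_Ioi_of_hasDerivAt_of_tendsto
    (f := fun x => -Real.exp (-(u*x))/u) (m := 0)
    (((Real.continuous_exp.comp (by fun_prop)).neg.div_const u).continuousWithinAt) h hint ?_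
  · rw [this]; field_simp; simp
  · have h1 : Tendsto (fun x : ℝ => -(u*x)) atTop atBot :=
      tendsto_neg_atTop_atBot.comp (tendsto_id.const_mul_atTop hu)
    have h2 : Tendsto (fun x => Real.exp (-(u*x))) atTop (nhds 0) :=
      Real.tendsto_exp_atBot.comp h1
    simpa using (h2.neg).div_const u

lemma tendsto_exp_neg_mul {u : ℝ} (hu : 0 < u) :
    Tendsto (fun x => Real.exp (-(u*x))) atTop (nhds 0) :=
  Real.tendsto_exp_atBot.comp (tendsto_neg_atTop_atBot.comp (tendsto_id.const_mul_atTop hu))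

-- new chunk
variable {κ u v : ℝ}

lemma qk_integrable (hκ : 0 ≤ κ) (hu : 0 < u) :
    IntegrableOn (fun x => Real.exp (-(u*x)) * ffun κ x) (Ioi (0:ℝ)) :=
  intOn_aux hu (ffun_cont κ).measurable (fun x hx => by
    rw [abs_of_pos (ffun_pos κ x)]; exact ffun_le_one hκ (le_of_lt hx))

lemma qk_nonneg (hκ : 0 ≤ κ) (hu : 0 < u) : 0 ≤ qkstar κ u := by
  rw [qk_eq]
  apply setIntegral_nonneg measurableSet_Ioi
  intro x _; exact mul_nonneg (Real.exp_pos _).le (ffun_pos κ x).le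

lemma qk_le (hκ : 0 ≤ κ) (hu : 0 < u) : qkstar κ u ≤ 1/u := by
  rw [qk_eq, ← integral_exp_Ioi hu]
  apply setIntegral_mono_on (qk_integrable hκ hu)
    (by simpa [neg_mul] using exp_neg_integrableOn_Ioi 0 hu) measurableSet_Ioi
  intro x hx
  nth_rewrite 2 [← mul_one (Real.exp (-(u*x)))]
  exact mul_le_mul_of_nonneg_left (ffun_le_one hκ (le_of_lt hx)) (Real.exp_pos _).le

lemma qk_sub (hκ : 0 ≤ κ) (hu : 0 < u) (huv : u ≤ v) :
    0 ≤ qkstar κ u - qkstar κ v ∧ qkstar κ u - qkstar κ v ≤ 1/u - 1/v := by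
  have hv : 0 < v := lt_of_lt_of_le hu huv
  have hdiff : qkstar κ u - qkstar κ v
      = ∫ x in Ioi (0:ℝ), (Real.exp (-(u*x)) - Real.exp (-(v*x))) * ffun κ x := by
    rw [qk_eq, qk_eq, ← integral_sub (qk_integrable hκ hu) (qk_integrable hκ hv)]
    congr 1; funext x; ring
  have hpt : ∀ x ∈ Ioi (0:ℝ), 0 ≤ (Real.exp (-(u*x)) - Real.exp (-(v*x))) * ffun κ x := by
    intro x hx
    have : Real.exp (-(v*x)) ≤ Real.exp (-(u*x)) := by
      apply Real.exp_le_exp.2; simp at hx ⊢; nlinarith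
    nlinarith [ffun_pos κ x]
  constructor
  · rw [hdiff]; exact setIntegral_nonneg measurableSet_Ioi hpt
  · rw [hdiff]
    have g1 : IntegrableOn (fun x => Real.exp (-(u*x))) (Ioi (0:ℝ)) := by
      simpa [neg_mul] using exp_neg_integrableOn_Ioi 0 hu
    have g2 : IntegrableOn (fun x => Real.exp (-(v*x))) (Ioi (0:ℝ)) := by
      simpa [neg_mul] using exp_neg_integrableOn_Ioi 0 hv
    have e1 : IntegrableOn (fun x => Real.exp (-(u*x)) - Real.exp (-(v*x))) (Ioi (0:ℝ)) :=
      g1.sub g2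
    have e2 : IntegrableOn (fun x => (Real.exp (-(u*x)) - Real.exp (-(v*x))) * ffun κ x)
        (Ioi (0:ℝ)) := by
      have := (intOn_aux hu (ffun_cont κ).measurable (C := 1) (fun x hx => by
        rw [abs_of_pos (ffun_pos κ x)]; exact ffun_le_one hκ (le_of_lt hx))).sub
        (intOn_aux hv (ffun_cont κ).measurable (C := 1) (fun x hx => by
        rw [abs_of_pos (ffun_pos κ x)]; exact ffun_le_one hκ (le_of_lt hx)))
      refine this.congr (Filter.Eventually.of_forall fun x => ?_)
      simp only [Pi.sub_apply]; ring
    calc ∫ x in Ioi (0:ℝ), (Real.exp (-(u*x)) - Real.exp (-(v*x))) * ffun κ x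
        ≤ ∫ x in Ioi (0:ℝ), (Real.exp (-(u*x)) - Real.exp (-(v*x))) := by
          apply setIntegral_mono_on e2 e1 measurableSet_Ioi
          intro x hx
          nth_rewrite 2 [← mul_one (Real.exp (-(u*x)) - Real.exp (-(v*x)))]
          apply mul_le_mul_of_nonneg_left (ffun_le_one hκ (le_of_lt hx))
          have : Real.exp (-(v*x)) ≤ Real.exp (-(u*x)) := by
            apply Real.exp_le_exp.2; simp at hx ⊢; nlinarith
          linarith
    _ = 1/u - 1/v := by
          rw [integral_sub g1 g2, integral_exp_Ioi hu, integral_exp_Ioi hv]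

lemma qk_contAt (hκ : 0 ≤ κ) (hu : 0 < u) : ContinuousAt (qkstar κ) u := by
  have key : ∀ w, 0 < w → |qkstar κ w - qkstar κ u| ≤ |1/w - 1/u| := by
    intro w hw
    rcases le_total w u with h | h
    · rcases qk_sub hκ hw h with ⟨h1, h2⟩
      rw [abs_of_nonneg h1]
      exact le_trans h2 (le_abs_self _)
    · rcases qk_sub hκ hu h with ⟨h1, h2⟩
      rw [abs_sub_comm, abs_of_nonneg h1, abs_sub_comm]
      exact le_trans h2 (le_abs_self _)
  have hcont : ContinuousAt (fun w : ℝ => |1/w - 1/u|) u := by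
    apply ContinuousAt.abs
    exact ((continuousAt_const.div continuousAt_id hu.ne').sub continuousAt_const)
  have ht : Tendsto (fun w : ℝ => |1/w - 1/u|) (nhds u) (nhds 0) := by
    simpa using hcont.tendsto
  rw [ContinuousAt, Metric.tendsto_nhds]
  intro ε hε
  filter_upwards [ht.eventually_lt_const hε, Ioi_mem_nhds hu] with w h1 h2
  rw [Real.dist_eq]
  exact lt_of_le_of_lt (key w h2) h1

noncomputable def Kfun (κ u : ℝ) : ℝ :=
  ∫ x in Ioi (0:ℝ), Real.exp (-(u*x)) * (hfun x * ffun κ x)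

variable {κ u : ℝ}

lemma Ifun_zero : Ifun 0 = 0 := by simp [Ifun]

lemma Kfun_integrable (hκ : 0 ≤ κ) (hu : 0 < u) :
    IntegrableOn (fun x => Real.exp (-(u*x)) * (hfun x * ffun κ x)) (Ioi (0:ℝ)) := by
  apply intOn_aux hu (hfun_meas.mul (ffun_cont κ).measurable)
  intro x hx
  rw [Pi.mul_apply, abs_mul, abs_of_nonneg (hfun_nonneg (le_of_lt hx)), abs_of_pos (ffun_pos κ x)]
  calc hfun x * ffun κ x ≤ 1 * 1 := by
        apply mul_le_mul (hfun_le_one (le_of_lt hx)) (ffun_le_one hκ (le_of_lt hx))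
          (ffun_pos κ x).le zero_le_one
  _ = 1 := by ring

lemma identityA (hκ : 0 ≤ κ) (hu : 0 < u) :
    u * qkstar κ u + κ * Kfun κ u = 1 := by
  set F : ℝ → ℝ := fun x => -(Real.exp (-(u*x)) * ffun κ x) with hF
  set ψ : ℝ → ℝ := fun x => Real.exp (-(u*x)) * (u * ffun κ x + κ * (hfun x * ffun κ x))
    with hψ
  have hderiv : ∀ x ∈ Ioi (0:ℝ), HasDerivAt F (ψ x) x := by
    intro x hx
    have h1 : HasDerivAt (fun x => Real.exp (-(u*x))) (Real.exp (-(u*x)) * (-u)) x := by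
      simpa using (((hasDerivAt_id x).const_mul u).neg).exp
    have h2 := (h1.mul (ffun_hasDeriv κ hx)).neg
    refine h2.congr_deriv ?_
    simp only [hψ]; ring
  have hint : IntegrableOn ψ (Ioi (0:ℝ)) := by
    apply intOn_aux hu (((ffun_cont κ).measurable.const_mul u).add
      ((hfun_meas.mul (ffun_cont κ).measurable).const_mul κ))
    intro x hx
    have b1 : 0 < ffun κ x := ffun_pos κ x
    have b2 : ffun κ x ≤ 1 := ffun_le_one hκ (le_of_lt hx)
    have b3 : 0 ≤ hfun x := hfun_nonneg (le_of_lt hx)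
    have b4 : hfun x ≤ 1 := hfun_le_one (le_of_lt hx)
    simp only [Pi.add_apply, Pi.mul_apply]
    rw [abs_of_nonneg (by positivity)]
    calc u * ffun κ x + κ * (hfun x * ffun κ x) ≤ u * 1 + κ * (1 * 1) := by
          apply add_le_add (mul_le_mul_of_nonneg_left b2 hu.le)
          apply mul_le_mul_of_nonneg_left _ hκ
          nlinarith
    _ = u + κ := by ring
  have hcont : ContinuousWithinAt F (Ici (0:ℝ)) 0 :=
    (((Real.continuous_exp.comp (by fun_prop)).mul (ffun_cont κ)).neg).continuousWithinAt
  have htend : Tendsto F atTop (nhds 0) := by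
    apply squeeze_zero_norm' (a := fun x => Real.exp (-(u*x)))
    · filter_upwards [eventually_ge_atTop (0:ℝ)] with x hx
      rw [hF, Real.norm_eq_abs, abs_neg, abs_mul, abs_of_pos (Real.exp_pos _),
        abs_of_pos (ffun_pos κ x)]
      nth_rewrite 2 [← mul_one (Real.exp (-(u*x)))]
      exact mul_le_mul_of_nonneg_left (ffun_le_one hκ hx) (Real.exp_pos _).le
    · exact tendsto_exp_neg_mul hu
  have key := MeasureTheory.integral_Ioi_of_hasDerivAt_of_tendsto hcont hderiv hint htend
  have hF0 : F 0 = -1 := by simp [hF, ffun, Ifun_zero]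
  rw [hF0] at key
  have split : ∫ x in Ioi (0:ℝ), ψ x
      = u * qkstar κ u + κ * Kfun κ u := by
    rw [qk_eq, Kfun, ← integral_const_mul, ← integral_const_mul,
      ← integral_add ((qk_integrable hκ hu).const_mul u) ((Kfun_integrable hκ hu).const_mul κ)]
    congr 1; funext x; rw [hψ]; ring
  rw [← split, key]; ring

lemma Kfun_integrable' (hκ : 0 ≤ κ) (hu : 0 < u) :
    IntegrableOn (fun x => Real.exp (-(u*x)) * (hfun x * ffun κ x)) (Ioi (0:ℝ)) :=
  Kfun_integrable hκ hu

lemma identityB (hκ : 0 ≤ κ) (hu : 0 < u) :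
    ∫ v in u..(u+1), qkstar κ v = Kfun κ u := by
  have hle : u ≤ u + 1 := by linarith
  rw [intervalIntegral.integral_of_le hle]
  have step1 : ∀ v ∈ Ioc u (u+1), qkstar κ v
      = ∫ x in Ioi (0:ℝ), Real.exp (-(v*x)) * ffun κ x := fun v _ => qk_eq κ v
  rw [setIntegral_congr_fun measurableSet_Ioc step1]
  -- Fubini
  have hswap := MeasureTheory.integral_integral_swap
    (μ := volume.restrict (Ioc u (u+1))) (ν := volume.restrict (Ioi (0:ℝ)))
    (f := fun v x => Real.exp (-(v*x)) * ffun κ x) ?_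
  · rw [hswap]
    rw [Kfun]
    apply setIntegral_congr_fun measurableSet_Ioi
    intro x hx
    have hx0 : (0:ℝ) < x := hx
    show (∫ v in Ioc u (u+1), Real.exp (-(v*x)) * ffun κ x)
        = Real.exp (-(u*x)) * (hfun x * ffun κ x)
    have inner : ∫ v in Ioc u (u+1), Real.exp (-(v*x)) = Real.exp (-(u*x)) * hfun x := by
      rw [← intervalIntegral.integral_of_le hle]
      have hd : ∀ v ∈ uIcc u (u+1), HasDerivAt (fun v => -Real.exp (-(v*x))/x)
          (Real.exp (-(v*x))) v := by
        intro v _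
        have h1 : HasDerivAt (fun v => Real.exp (-(v*x))) (Real.exp (-(v*x)) * (-x)) v := by
          have h0 : HasDerivAt (fun v : ℝ => -(v*x)) (-x) v := ((hasDerivAt_mul_const x).neg)
          exact h0.exp
        refine (h1.neg.div_const x).congr_deriv ?_
        simp [hx0.ne']
      rw [intervalIntegral.integral_eq_sub_of_hasDerivAt hd]
      · rw [hfun]
        rw [show -((u+1)*x) = -(u*x) + -x by ring]
        rw [Real.exp_add]
        field_simp
        ring
      · apply Continuous.intervalIntegrable
        exact Real.continuous_exp.comp (by fun_prop)
    rw [integral_mul_const, inner]; ring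
  · rw [Measure.prod_restrict]
    have hG : Integrable (fun z : ℝ×ℝ => (fun _ : ℝ => (1:ℝ)) z.1
        * (fun x => Real.exp (-(u*x)) * ffun κ x) z.2)
        ((volume.restrict (Ioc u (u+1))).prod (volume.restrict (Ioi (0:ℝ)))) :=
      Integrable.mul_prod (integrableOn_const (C := (1:ℝ)) measure_Ioc_lt_top.ne :
          Integrable (fun _ : ℝ => (1:ℝ)) (volume.restrict (Ioc u (u+1))))
        (qk_integrable hκ hu)
    rw [Measure.prod_restrict] at hG
    apply Integrable.mono' hG
    · apply Continuous.aestronglyMeasurable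
      exact (Real.continuous_exp.comp (continuous_fst.mul continuous_snd).neg).mul
        ((ffun_cont κ).comp continuous_snd)
    · filter_upwards [ae_restrict_mem (measurableSet_Ioc.prod measurableSet_Ioi)] with z hz
      obtain ⟨hz1, hz2⟩ := hz
      simp only [one_mul]
      rw [Real.norm_eq_abs, Function.uncurry, abs_mul, abs_of_pos (Real.exp_pos _), abs_of_pos (ffun_pos κ _)]
      apply mul_le_mul_of_nonneg_right _ (ffun_pos κ _).le
      apply Real.exp_le_exp.2
      have h1 : u ≤ z.1 := le_of_lt hz1.1
      have h2 : (0:ℝ) ≤ z.2 := le_of_lt hz2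
      nlinarith

lemma qk_identity {κ u : ℝ} (hκ : 0 ≤ κ) (hu : 0 < u) :
    u * qkstar κ u + κ * ∫ v in u..(u+1), qkstar κ v = 1 := by
  rw [identityB hκ hu]
  exact identityA hκ hu

variable {κ : ℝ} {q : ℝ → ℝ}

lemma q_contOn (hdiff : ∀ u : ℝ, 0 < u → DifferentiableAt ℝ q u) :
    ContinuousOn q (Ioi (0:ℝ)) :=
  fun x hx => ((hdiff x hx).continuousAt).continuousWithinAt

lemma q_intInt (hdiff : ∀ u : ℝ, 0 < u → DifferentiableAt ℝ q u)
    {a b : ℝ} (ha : 0 < a) (hb : 0 < b) : IntervalIntegrable q volume a b := by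
  apply ContinuousOn.intervalIntegrable
  apply (q_contOn hdiff).mono
  rcases le_total a b with h | h
  · rw [uIcc_of_le h]; intro x hx; exact lt_of_lt_of_le ha hx.1
  · rw [uIcc_of_ge h]; intro x hx; exact lt_of_lt_of_le hb hx.1

lemma phi_hasDeriv (hdiff : ∀ u : ℝ, 0 < u → DifferentiableAt ℝ q u)
    (heq : ∀ u : ℝ, 0 < u → u * deriv q u = (κ - 1) * q u - κ * q (u + 1))
    {u : ℝ} (hu : 0 < u) :
    HasDerivAt (fun w => w * q w + κ * ∫ v in w..(w+1), q v) 0 u := by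
  set a := u/2 with ha
  have ha0 : 0 < a := by positivity
  have hG : ∀ w : ℝ, 0 < w → HasDerivAt (fun w => ∫ v in a..w, q v) (q w) w := by
    intro w hw
    apply intervalIntegral.integral_hasDerivAt_right (q_intInt hdiff ha0 hw)
    · exact ⟨Ioi 0, Ioi_mem_nhds hw,
        ((q_contOn hdiff).aestronglyMeasurable measurableSet_Ioi)⟩
    · exact (hdiff w hw).continuousAt
  have hEq : (fun w : ℝ => w * q w + κ * ∫ v in w..(w+1), q v)
      =ᶠ[nhds u] (fun w => w * q w + κ * ((∫ v in a..(w+1), q v) - ∫ v in a..w, q v)) := by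
    filter_upwards [Ioi_mem_nhds (by linarith : a < u)] with w hw
    have hw0 : 0 < w := lt_trans ha0 hw
    rw [intervalIntegral.integral_interval_sub_left (q_intInt hdiff ha0 (by linarith))
      (q_intInt hdiff ha0 hw0)]
  have hd1 : HasDerivAt (fun w : ℝ => w * q w) (1 * q u + u * deriv q u) u :=
    (hasDerivAt_id u).mul (hdiff u hu).hasDerivAt
  have hd2 : HasDerivAt (fun w : ℝ => ∫ v in a..(w+1), q v) (q (u+1)) u := by
    have h1 := hG (u+1) (by linarith)
    have h2 : HasDerivAt (fun w : ℝ => w + 1) 1 u := (hasDerivAt_id u).add_const 1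
    have := HasDerivAt.comp u (h1) h2
    simpa [Function.comp_def] using this
  have hd3 : HasDerivAt
      (fun w => w * q w + κ * ((∫ v in a..(w+1), q v) - ∫ v in a..w, q v))
      (1 * q u + u * deriv q u + κ * (q (u+1) - q u)) u :=
    hd1.add (((hd2.sub (hG u hu))).const_mul κ)
  have := hd3.congr_of_eventuallyEq hEq
  have e : (1 * q u + u * deriv q u + κ * (q (u+1) - q u)) = 0 := by rw [heq u hu]; ring
  rw [e] at this; exact this

lemma phi_const (hdiff : ∀ u : ℝ, 0 < u → DifferentiableAt ℝ q u)
    (heq : ∀ u : ℝ, 0 < u → u * deriv q u = (κ - 1) * q u - κ * q (u + 1)) :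
    ∃ c : ℝ, ∀ u : ℝ, 0 < u → u * q u + κ * ∫ v in u..(u+1), q v = c := by
  set Φ := fun w : ℝ => w * q w + κ * ∫ v in w..(w+1), q v with hΦ
  have key : ∀ a b : ℝ, 0 < a → a ≤ b → Φ b = Φ a := by
    intro a b ha hab
    have hcont : ContinuousOn Φ (Icc a b) := by
      intro x hx
      exact ((phi_hasDeriv hdiff heq (lt_of_lt_of_le ha hx.1)).differentiableAt
        |>.continuousAt).continuousWithinAt
    have hderiv : ∀ x ∈ Ico a b, HasDerivWithinAt Φ 0 (Ici x) x := by
      intro x hx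
      exact (phi_hasDeriv hdiff heq (lt_of_lt_of_le ha hx.1)).hasDerivWithinAt
    exact constant_of_has_deriv_right_zero hcont hderiv b (right_mem_Icc.2 hab)
  refine ⟨Φ 1, fun u hu => ?_⟩
  rcases le_total u 1 with h | h
  · exact (key u 1 hu h).symm ▸ rfl
  · exact key 1 u one_pos h

lemma contOn_intInt {f : ℝ → ℝ} (hf : ContinuousOn f (Ioi (0:ℝ)))
    {a b : ℝ} (ha : 0 < a) (hb : 0 < b) : IntervalIntegrable f volume a b := by
  apply ContinuousOn.intervalIntegrable
  apply hf.mono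
  rcases le_total a b with h | h
  · rw [uIcc_of_le h]; intro x hx; exact lt_of_lt_of_le ha hx.1
  · rw [uIcc_of_ge h]; intro x hx; exact lt_of_lt_of_le hb hx.1

lemma exists_neg (hκ : 0 < κ)
    (hdiff : ∀ u : ℝ, 0 < u → DifferentiableAt ℝ q u)
    (heq : ∀ u : ℝ, 0 < u → u * deriv q u = (κ - 1) * q u - κ * q (u + 1))
    (hnp : ∀ A : ℝ, ∃ u : ℝ, 0 < u ∧ q u ≠ A * qkstar κ u)
    {u0 : ℝ} (hu0 : 0 < u0) :
    ∃ t : ℝ, u0 ≤ t ∧ q t < 0 := by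
  by_contra hcon
  push_neg at hcon
  obtain ⟨c, hc⟩ := phi_const hdiff heq
  set g := fun v => q v - c * qkstar κ v with hg
  have hqcont : ContinuousOn q (Ioi (0:ℝ)) :=
    fun x hx => ((hdiff x hx).continuousAt).continuousWithinAt
  have hkcont : ContinuousOn (qkstar κ) (Ioi (0:ℝ)) :=
    fun x hx => (qk_contAt hκ.le hx).continuousWithinAt
  have hgcontAt : ∀ x : ℝ, 0 < x → ContinuousAt g x := by
    intro x hx
    exact ((hdiff x hx).continuousAt).sub (continuousAt_const.mul (qk_contAt hκ.le hx))
  have hgcont : ContinuousOn g (Ioi (0:ℝ)) :=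
    fun x hx => (hgcontAt x hx).continuousWithinAt
  have hgint : ∀ a b : ℝ, 0 < a → 0 < b → IntervalIntegrable g volume a b :=
    fun a b ha hb => contOn_intInt hgcont ha hb
  -- the fundamental relation for g
  have hgrel : ∀ u : ℝ, 0 < u → u * g u = -κ * ∫ v in u..(u+1), g v := by
    intro u hu
    have h1 := hc u hu
    have h2 := qk_identity hκ.le hu
    have hsplit : ∫ v in u..(u+1), g v
        = (∫ v in u..(u+1), q v) - c * ∫ v in u..(u+1), qkstar κ v := by
      rw [hg]
      rw [intervalIntegral.integral_sub (contOn_intInt hqcont hu (by linarith))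
        ((contOn_intInt hkcont hu (by linarith)).const_mul c)]
      rw [intervalIntegral.integral_const_mul]
    rw [hsplit]
    simp only [hg]
    linear_combination h1 - c * h2
  -- c is nonnegative
  have hintq_nonneg : ∀ u : ℝ, u0 ≤ u → 0 ≤ ∫ v in u..(u+1), q v := by
    intro u hu
    apply intervalIntegral.integral_nonneg (by linarith)
    intro v hv
    exact hcon v (le_trans hu hv.1)
  have hc0 : 0 ≤ c := by
    have h1 := hc u0 hu0
    have h2 := hintq_nonneg u0 le_rfl
    nlinarith [hcon u0 le_rfl]
  -- basic bound |u g u| ≤ c for u ≥ u0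
  have hbound : ∀ u : ℝ, u0 ≤ u → |u * g u| ≤ c := by
    intro u hu
    have hu' : 0 < u := lt_of_lt_of_le hu0 hu
    have h1 := hc u hu'
    have h2 : 0 ≤ ∫ v in u..(u+1), q v := hintq_nonneg u hu
    have hq1 : 0 ≤ u * q u := mul_nonneg hu'.le (hcon u hu)
    have hq2 : u * q u ≤ c := by nlinarith
    have hk1 : 0 ≤ u * (c * qkstar κ u) :=
      mul_nonneg hu'.le (mul_nonneg hc0 (qk_nonneg hκ.le hu'))
    have hk2 : u * (c * qkstar κ u) ≤ c := by
      have h3 : u * qkstar κ u ≤ u * (1/u) :=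
        mul_le_mul_of_nonneg_left (qk_le hκ.le hu') hu'.le
      have h4 : u * (1/u) = 1 := by field_simp
      nlinarith [hc0]
    have hgu2 : u * g u = u * q u - u * (c * qkstar κ u) := by
      simp only [hg]; ring
    rw [abs_le]
    constructor <;> linarith
  -- iterate the relation to kill g at infinity
  set u1 : ℝ := max u0 (2*κ) with hu1def
  have hu1 : 0 < u1 := lt_of_lt_of_le hu0 (le_max_left _ _)
  have hu1κ : 2*κ ≤ u1 := le_max_right _ _
  have hstep : ∀ n : ℕ, ∀ u : ℝ, u1 ≤ u → |u * g u| ≤ c * (1/2)^n := by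
    intro n
    induction n with
    | zero => intro u hu; simpa using hbound u (le_trans (le_max_left _ _) hu)
    | succ n ih =>
      intro u hu
      have hu' : 0 < u := lt_of_lt_of_le hu1 hu
      set D := c * (1/2)^n with hD
      have hD0 : 0 ≤ D := by positivity
      have hbd : ∀ v ∈ uIoc u (u+1), ‖g v‖ ≤ D / u := by
        intro v hv
        rw [uIoc_of_le (by linarith : u ≤ u+1)] at hv
        have hv1 : u1 ≤ v := le_trans hu hv.1.le
        have hv0 : 0 < v := lt_of_lt_of_le hu1 hv1
        have := ih v hv1
        rw [abs_mul, abs_of_pos hv0] at this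
        rw [Real.norm_eq_abs]
        calc |g v| ≤ D / v := by rw [le_div_iff₀ hv0]; linarith [this]
        _ ≤ D / u := div_le_div_of_nonneg_left hD0 hu' hv.1.le
      have hnorm := intervalIntegral.norm_integral_le_of_norm_le_const hbd
      simp only [add_sub_cancel_left, abs_one, mul_one] at hnorm
      have hrel := hgrel u hu'
      have habs : |u * g u| = κ * ‖∫ v in u..(u+1), g v‖ := by
        rw [hrel, Real.norm_eq_abs, abs_mul, abs_neg, abs_of_pos hκ]
      rw [habs]
      have hfin : κ * (D / u) ≤ c * (1/2)^(n+1) := by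
        have h5 : c * (1/2)^(n+1) = D / 2 := by rw [hD, pow_succ]; ring
        rw [h5]
        rw [show κ * (D / u) = (κ * D) / u by ring, div_le_div_iff₀ hu' two_pos]
        nlinarith
      calc κ * ‖∫ v in u..(u+1), g v‖ ≤ κ * (D / u) := by
            apply mul_le_mul_of_nonneg_left _ hκ.le
            simpa using hnorm
      _ ≤ c * (1/2)^(n+1) := hfin
  have hzero1 : ∀ u : ℝ, u1 ≤ u → g u = 0 := by
    intro u hu
    have hu' : 0 < u := lt_of_lt_of_le hu1 hu
    have htend : Tendsto (fun n : ℕ => c * (1/2)^n) atTop (nhds 0) := by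
      have := tendsto_pow_atTop_nhds_zero_of_lt_one (by norm_num : (0:ℝ) ≤ 1/2)
        (by norm_num : (1:ℝ)/2 < 1)
      simpa using this.const_mul c
    have h0 : |u * g u| ≤ 0 := ge_of_tendsto' htend (fun n => hstep n u hu)
    have h1 : u * g u = 0 := abs_eq_zero.1 (le_antisymm h0 (abs_nonneg _))
    rcases mul_eq_zero.1 h1 with h | h
    · exact absurd h hu'.ne'
    · exact h
  -- backward propagation : g vanishes on all of (0, ∞)
  have hzero : ∀ w : ℝ, 0 < w → g w = 0 := by
    intro w hw
    by_contra hne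
    set S := {b : ℝ | w ≤ b ∧ ∀ v, b ≤ v → g v = 0} with hS
    have hSne : max w u1 ∈ S := ⟨le_max_left _ _,
      fun v hv => hzero1 v (le_trans (le_max_right _ _) hv)⟩
    have hbdd : BddBelow S := ⟨w, fun x hx => hx.1⟩
    set b := sInf S with hb
    have hbw : w ≤ b := le_csInf ⟨_, hSne⟩ (fun x hx => hx.1)
    have hb0 : 0 < b := lt_of_lt_of_le hw hbw
    have hPb' : ∀ v, b < v → g v = 0 := by
      intro v hv
      obtain ⟨s, hsS, hs⟩ := (csInf_lt_iff hbdd ⟨_, hSne⟩).1 hv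
      exact hsS.2 v hs.le
    have hPb : ∀ v, b ≤ v → g v = 0 := by
      intro v hv
      rcases eq_or_lt_of_le hv with h | h
      · -- v = b : continuity
        rw [← h]
        have ht1 : Tendsto g (nhdsWithin b (Ioi b)) (nhds (g b)) :=
          ((hgcontAt b hb0).tendsto).mono_left nhdsWithin_le_nhds
        have ht2 : Tendsto g (nhdsWithin b (Ioi b)) (nhds 0) := by
          apply Tendsto.congr' _ tendsto_const_nhds
          filter_upwards [self_mem_nhdsWithin] with x hx
          exact (hPb' x hx).symm
        exact tendsto_nhds_unique ht1 ht2
      · exact hPb' v h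
    rcases eq_or_lt_of_le hbw with h | hwb
    · exact hne (by rw [h]; exact hPb b le_rfl)
    · -- extend below b, contradicting the infimum
      set ε : ℝ := min 1 (min (b/2) (min (b/(4*κ)) (b - w))) with hε
      have hε0 : 0 < ε := by
        apply lt_min one_pos
        apply lt_min (by positivity)
        exact lt_min (by positivity) (by linarith)
      have hε1 : ε ≤ 1 := min_le_left _ _
      have hε2 : ε ≤ b/2 := le_trans (min_le_right _ _) (min_le_left _ _)
      have hε3 : ε ≤ b/(4*κ) :=
        le_trans (min_le_right _ _) (le_trans (min_le_right _ _) (min_le_left _ _))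
      have hε4 : ε ≤ b - w := le_trans (min_le_right _ _)
        (le_trans (min_le_right _ _) (min_le_right _ _))
      have hbε : 0 < b - ε := by linarith
      obtain ⟨t₀, ht₀mem, ht₀max⟩ := (isCompact_Icc (a := b - ε) (b := b)).exists_isMaxOn
        ⟨b, by constructor <;> linarith⟩
        ((hgcont.mono (fun x hx => lt_of_lt_of_le hbε hx.1)).abs)
      have hmax : ∀ x ∈ Icc (b-ε) b, |g x| ≤ |g t₀| := ht₀max
      have ht₀0 : 0 < t₀ := lt_of_lt_of_le hbε ht₀mem.1
      -- the relation at t₀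
      have hrel := hgrel t₀ ht₀0
      have hsplit : ∫ v in t₀..(t₀+1), g v = ∫ v in t₀..b, g v := by
        have hb1 : b ≤ t₀ + 1 := by
          have := ht₀mem.1; linarith
        have hzero2 : ∫ v in b..(t₀+1), g v = 0 := by
          rw [intervalIntegral.integral_congr (g := fun _ => (0:ℝ))
            (fun x hx => by
              rw [uIcc_of_le hb1] at hx
              exact hPb x hx.1)]
          simp
        rw [← intervalIntegral.integral_add_adjacent_intervals
          (hgint t₀ b ht₀0 hb0) (hgint b (t₀+1) hb0 (by linarith)), hzero2, add_zero]
      have hbnd : ∀ x ∈ uIoc t₀ b, ‖g x‖ ≤ |g t₀| := by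
        intro x hx
        rw [uIoc_of_le ht₀mem.2] at hx
        exact hmax x ⟨le_trans ht₀mem.1 hx.1.le, hx.2⟩
      have hnorm := intervalIntegral.norm_integral_le_of_norm_le_const hbnd
      have hbt : |b - t₀| ≤ ε := by
        rw [abs_of_nonneg (by linarith [ht₀mem.2])]
        linarith [ht₀mem.1]
      have hchain : (b - ε) * |g t₀| ≤ κ * (|g t₀| * ε) := by
        have h1 : |t₀ * g t₀| = κ * ‖∫ v in t₀..b, g v‖ := by
          rw [hrel, hsplit, Real.norm_eq_abs, abs_mul, abs_neg, abs_of_pos hκ]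
        have h2 : (b - ε) * |g t₀| ≤ |t₀ * g t₀| := by
          rw [abs_mul, abs_of_pos ht₀0]
          apply mul_le_mul_of_nonneg_right _ (abs_nonneg _)
          linarith [ht₀mem.1]
        have h3 : κ * ‖∫ v in t₀..b, g v‖ ≤ κ * (|g t₀| * ε) := by
          apply mul_le_mul_of_nonneg_left _ hκ.le
          exact le_trans hnorm (mul_le_mul_of_nonneg_left hbt (abs_nonneg _))
        linarith
      have hgt₀ : |g t₀| = 0 := by
        have hκε : κ * ε ≤ b/4 := by
          rw [show b/4 = κ * (b/(4*κ)) by field_simp]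
          exact mul_le_mul_of_nonneg_left hε3 hκ.le
        nlinarith [abs_nonneg (g t₀)]
      have hmem : b - ε ∈ S := by
        refine ⟨by linarith, fun v hv => ?_⟩
        rcases le_total v b with h | h
        · have := hmax v ⟨hv, h⟩
          rw [hgt₀] at this
          exact abs_eq_zero.1 (le_antisymm this (abs_nonneg _))
        · exact hPb v h
      have : b ≤ b - ε := csInf_le hbdd hmem
      linarith
  obtain ⟨x, hx, hnex⟩ := hnp c
  apply hnex
  have := hzero x hx
  simp only [hg] at this
  linarith

theorem stmt9 (κ : ℝ) (hκ : 0 < κ) (q : ℝ → ℝ)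
    (hdiff : ∀ u : ℝ, 0 < u → DifferentiableAt ℝ q u)
    (heq : ∀ u : ℝ, 0 < u → u * deriv q u = (κ - 1) * q u - κ * q (u + 1))
    (hnp : ∀ A : ℝ, ∃ u : ℝ, 0 < u ∧ q u ≠ A * qkstar κ u) :
    ∀ u : ℝ, 0 < u →
      (∃ s : ℝ, u ≤ s ∧ 0 < q s) ∧ (∃ t : ℝ, u ≤ t ∧ q t < 0) := by
  intro u hu
  constructor
  · have hdiff' : ∀ v : ℝ, 0 < v → DifferentiableAt ℝ (fun x => -q x) v :=
      fun v hv => (hdiff v hv).neg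
    have heq' : ∀ v : ℝ, 0 < v →
        v * deriv (fun x => -q x) v = (κ - 1) * (-q v) - κ * (-q (v + 1)) := by
      intro v hv
      rw [deriv.fun_neg]
      linear_combination -heq v hv
    have hnp' : ∀ A : ℝ, ∃ w : ℝ, 0 < w ∧ (fun x => -q x) w ≠ A * qkstar κ w := by
      intro A
      obtain ⟨w, hw, hne⟩ := hnp (-A)
      refine ⟨w, hw, fun hco => hne ?_⟩
      linear_combination (-1 : ℝ) * hco
    obtain ⟨s, hs, hneg⟩ := exists_neg hκ hdiff' heq' hnp' hu
    exact ⟨s, hs, by linarith [hneg]⟩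
  · exact exists_neg hκ hdiff heq hnp hu
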